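/- If f has finite-sum structure f(w) = (1/n) Σᵢ fᵢ(w), each fᵢ is convex and Lᵢ-smooth with Lᵢ ≤ L_max, and the model interpolates the data (i.e., ∇fᵢ(w*) = 0 for all i at the minimizer w* of f), then for all w: E_i ‖∇fᵢ(w)‖² ≤ 2 L_max [f(w) − f(w*)]. -/

import Mathlib

open scoped RealInnerProductSpace
open Finset

/-- Derivative of `t ↦ g (x + t • v)` when `g` has a gradient everywhere. -/
lemma hasDerivAt_line {E : Type*} [NormedAddCommGroup E] [InnerProductSpace ℝ E] [CompleteSpace E]
    {g : E → ℝ} {g' : E → E} (hg : ∀ x, HasGradientAt g (g' x) x) (x v : E) (t : ℝ) :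
    HasDerivAt (fun t : ℝ => g (x + t • v)) ⟪g' (x + t • v), v⟫ t := by
  have hγ : HasDerivAt (fun t : ℝ => x + t • v) v t := by
    simpa using ((hasDerivAt_id t).smul_const v).const_add x
  have := (hg (x + t • v)).hasFDerivAt.comp_hasDerivAt t hγ
  simpa [InnerProductSpace.toDual_apply_apply, Function.comp_def] using this

/-- Descent lemma for functions with Lipschitz gradient. -/
lemma descent_lemma {E : Type*} [NormedAddCommGroup E] [InnerProductSpace ℝ E] [CompleteSpace E]
    {g : E → ℝ} {g' : E → E} {L : NNReal}
    (hg : ∀ x, HasGradientAt g (g' x) x) (hL : LipschitzWith L g') (x y : E) :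
    g y ≤ g x + ⟪g' x, y - x⟫ + (L : ℝ) / 2 * ‖y - x‖ ^ 2 := by
  set v := y - x with hv
  have hcont : Continuous fun t : ℝ => ⟪g' (x + t • v), v⟫ :=
    (hL.continuous.comp (by continuity)).inner continuous_const
  have hint : (∫ t in (0:ℝ)..1, ⟪g' (x + t • v), v⟫)
      = g (x + (1:ℝ) • v) - g (x + (0:ℝ) • v) :=
    intervalIntegral.integral_eq_sub_of_hasDerivAt
      (fun t _ => hasDerivAt_line hg x v t) (hcont.intervalIntegrable 0 1)
  have hb : (∫ t in (0:ℝ)..1, ⟪g' (x + t • v), v⟫)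
      ≤ ∫ t in (0:ℝ)..1, (⟪g' x, v⟫ + (L : ℝ) * ‖v‖ ^ 2 * t) := by
    apply intervalIntegral.integral_mono_on zero_le_one (hcont.intervalIntegrable 0 1)
    · exact (Continuous.intervalIntegrable (by continuity) 0 1)
    · intro t ht
      have h1 : ⟪g' (x + t • v), v⟫ - ⟪g' x, v⟫ = ⟪g' (x + t • v) - g' x, v⟫ :=
        (inner_sub_left _ _ _).symm
      have h2 : ⟪g' (x + t • v) - g' x, v⟫ ≤ ‖g' (x + t • v) - g' x‖ * ‖v‖ :=
        real_inner_le_norm _ _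
      have h3 : ‖g' (x + t • v) - g' x‖ ≤ (L : ℝ) * (t * ‖v‖) := by
        have := hL.dist_le_mul (x + t • v) x
        simpa [dist_eq_norm, norm_smul, abs_of_nonneg ht.1] using this
      nlinarith [norm_nonneg v, norm_nonneg (g' (x + t • v) - g' x), ht.1]
  have hcalc : (∫ t in (0:ℝ)..1, (⟪g' x, v⟫ + (L : ℝ) * ‖v‖ ^ 2 * t))
      = ⟪g' x, v⟫ + (L : ℝ) / 2 * ‖v‖ ^ 2 := by
    rw [intervalIntegral.integral_add (intervalIntegrable_const)
      ((intervalIntegral.intervalIntegrable_id).const_mul _),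
      intervalIntegral.integral_const_mul, integral_id, intervalIntegral.integral_const]
    simp only [smul_eq_mul]; ring
  have := hint ▸ hb
  simp only [one_smul, zero_smul, add_zero] at this
  rw [hcalc] at this
  have hy : x + v = y := by rw [hv]; abel
  rw [hy] at this
  linarith

/-- Convexity plus zero gradient gives global minimum. -/
lemma min_of_grad_zero {E : Type*} [NormedAddCommGroup E] [InnerProductSpace ℝ E] [CompleteSpace E]
    {g : E → ℝ} {g' : E → E} (hconv : ConvexOn ℝ Set.univ g)
    (hg : ∀ x, HasGradientAt g (g' x) x) {xs : E} (h0 : g' xs = 0) (y : E) :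
    g xs ≤ g y := by
  set φ : ℝ → ℝ := fun t => g (xs + t • (y - xs)) with hφ
  have hφconv : ConvexOn ℝ Set.univ φ := by
    have h := hconv.comp_affineMap (AffineMap.lineMap xs y : ℝ →ᵃ[ℝ] E)
    have heq : (g ∘ (AffineMap.lineMap xs y : ℝ →ᵃ[ℝ] E)) = φ := by
      funext t
      simp [hφ, AffineMap.lineMap_apply_module']
      rw [add_comm]
    rw [heq, Set.preimage_univ] at h
    exact h
  have hd : HasDerivAt φ 0 (0 : ℝ) := by
    have := hasDerivAt_line hg xs (y - xs) 0
    simpa [h0] using this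
  have hs := hφconv.le_slope_of_hasDerivWithinAt (Set.mem_univ 0) (Set.mem_univ 1)
    one_pos hd.hasDerivWithinAt
  have : (0:ℝ) ≤ φ 1 - φ 0 := by simpa [slope_def_field] using hs
  have h0' : φ 0 = g xs := by simp [hφ]
  have h1' : φ 1 = g y := by simp [hφ]
  linarith

/-- Per-function weak growth inequality. -/
lemma per_fn_bound {E : Type*} [NormedAddCommGroup E] [InnerProductSpace ℝ E] [CompleteSpace E]
    {g : E → ℝ} {g' : E → E} {L Lmax : ℝ}
    (hconv : ConvexOn ℝ Set.univ g)
    (hg : ∀ x, HasGradientAt g (g' x) x)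
    (hL : LipschitzWith (Real.toNNReal L) g')
    (hLm : L ≤ Lmax) {xs : E} (h0 : g' xs = 0) (w : E) :
    ‖g' w‖ ^ 2 ≤ 2 * Lmax * (g w - g xs) := by
  rcases le_or_gt L 0 with hle | hpos
  · -- gradient is constant 0, g is constant
    have hgz : ∀ x, g' x = 0 := by
      intro x
      have := hL.dist_le_mul x xs
      rw [Real.toNNReal_of_nonpos hle] at this
      simp only [NNReal.coe_zero, zero_mul] at this
      have : g' x = g' xs := by
        rwa [dist_le_zero] at this
      rw [this, h0]
    have hconst : g w = g xs := by
      have hdiff : Differentiable ℝ g := fun x => ((hg x).hasFDerivAt).differentiableAt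
      have hfz : ∀ x : E, fderiv ℝ g x = 0 := by
        intro x
        have := ((hg x).hasFDerivAt).fderiv
        rw [this, hgz x]
        simp
      exact is_const_of_fderiv_eq_zero hdiff hfz w xs
    rw [hgz w, hconst]
    simp
  · -- main case
    have hLc : ((Real.toNNReal L : NNReal) : ℝ) = L := Real.coe_toNNReal _ hpos.le
    set y := w - L⁻¹ • g' w with hy
    have hdesc := descent_lemma hg hL w y
    have hyw : y - w = -(L⁻¹ • g' w) := by rw [hy]; abel
    rw [hyw, hLc] at hdesc
    have hinner : ⟪g' w, -(L⁻¹ • g' w)⟫ = -(L⁻¹ * ‖g' w‖ ^ 2) := by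
      rw [inner_neg_right, real_inner_smul_right, real_inner_self_eq_norm_sq]
    have hnorm : ‖-(L⁻¹ • g' w)‖ ^ 2 = L⁻¹ ^ 2 * ‖g' w‖ ^ 2 := by
      rw [norm_neg, norm_smul, Real.norm_eq_abs, abs_inv, abs_of_pos hpos]
      ring
    rw [hinner, hnorm] at hdesc
    have hmin : g xs ≤ g y := min_of_grad_zero hconv hg h0 y
    have key : ‖g' w‖ ^ 2 ≤ 2 * L * (g w - g xs) := by
      have hL2 : L / 2 * (L⁻¹ ^ 2 * ‖g' w‖ ^ 2) = ‖g' w‖ ^ 2 / (2 * L) := by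
        field_simp
      rw [hL2] at hdesc
      have h2 : g xs ≤ g w - L⁻¹ * ‖g' w‖ ^ 2 + ‖g' w‖ ^ 2 / (2 * L) := le_trans hmin hdesc
      have h3 : L⁻¹ * ‖g' w‖ ^ 2 - ‖g' w‖ ^ 2 / (2 * L) = ‖g' w‖ ^ 2 / (2 * L) := by
        field_simp; ring
      have h4 : ‖g' w‖ ^ 2 / (2 * L) ≤ g w - g xs := by linarith
      rw [div_le_iff₀ (by positivity)] at h4
      linarith [mul_comm (g w - g xs) (2 * L)]
    have hgd : 0 ≤ g w - g xs := by
      have := min_of_grad_zero hconv hg h0 w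
      linarith
    nlinarith [hgd, hpos, hLm]
/-- For a finite-sum convex smooth objective under interpolation,
the expected squared norm of stochastic gradients satisfies the weak growth bound
`E_i ‖∇f_i(w)‖² ≤ 2 L_max [f(w) − f(w*)]`. -/
theorem finite_sum_weak_growth
    (d n : ℕ) (hn : 0 < n)
    (f : EuclideanSpace ℝ (Fin d) → ℝ)
    (fi : Fin n → EuclideanSpace ℝ (Fin d) → ℝ)
    (fi' : Fin n → EuclideanSpace ℝ (Fin d) → EuclideanSpace ℝ (Fin d))
    (Li : Fin n → ℝ) (Lmax : ℝ)
    (wstar : EuclideanSpace ℝ (Fin d))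
    (hf : ∀ w, f w = (1 / (n : ℝ)) * ∑ i, fi i w)
    (hconv : ∀ i, ConvexOn ℝ Set.univ (fi i))
    (hgrad : ∀ i w, HasGradientAt (fi i) (fi' i w) w)
    (hlip : ∀ i, LipschitzWith (Real.toNNReal (Li i)) (fi' i))
    (hLmax : ∀ i, Li i ≤ Lmax)
    (hmin : ∀ w, f wstar ≤ f w)
    (hinterp : ∀ i, fi' i wstar = 0) :
    ∀ w, (1 / (n : ℝ)) * ∑ i, ‖fi' i w‖ ^ 2 ≤ 2 * Lmax * (f w - f wstar) := by
  intro w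
  have hper : ∀ i, ‖fi' i w‖ ^ 2 ≤ 2 * Lmax * (fi i w - fi i wstar) := fun i =>
    per_fn_bound (hconv i) (hgrad i) (hlip i) (hLmax i) (hinterp i) w
  have hsum : ∑ i, ‖fi' i w‖ ^ 2 ≤ ∑ i, 2 * Lmax * (fi i w - fi i wstar) :=
    Finset.sum_le_sum fun i _ => hper i
  have h1 : (1 / (n : ℝ)) * ∑ i, ‖fi' i w‖ ^ 2
      ≤ (1 / (n : ℝ)) * ∑ i, 2 * Lmax * (fi i w - fi i wstar) :=
    mul_le_mul_of_nonneg_left hsum (by positivity)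
  have h2 : (1 / (n : ℝ)) * ∑ i, 2 * Lmax * (fi i w - fi i wstar)
      = 2 * Lmax * (f w - f wstar) := by
    rw [hf w, hf wstar, ← Finset.mul_sum, Finset.sum_sub_distrib]
    ring
  linarith
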